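/- arXiv:1904.09343 — 2 statements merged into one kernel-verified Lean document; each statement's English description precedes it below -/
import Mathlib

section
/- Let H be a Hilbert space, D₊ and D₋ closed mutually orthogonal subspaces, P⁺ and P⁻ the orthogonal projections onto D₊^⊥ and D₋^⊥, (U(t))_{t≥0} and (U_L(t))_{t≥0} semigroups of bounded operators on H with: U_L(s)(D₋^⊥) ⊆ D₊ for all s ≥ 2R; U(t)(D₋^⊥) ⊆ D₋^⊥ for all t ≥ 0; U(t)D₊ ⊆ D₊ for all t ≥ 0; P⁺φ = 0 for φ ∈ D₊. Set M = U(2R) - U_L(2R) and Z(t) = P⁺U(t)P⁻. Then for all t ≥ 4R, Z(t) = P⁺ ∘ M ∘ U(t - 4R) ∘ M ∘ P⁻. -/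
set_option synthInstance.maxHeartbeats 1000000
set_option maxHeartbeats 1000000

theorem stmt_13 {H : Type*} [NormedAddCommGroup H] [InnerProductSpace ℝ H]
    [CompleteSpace H]
    (Dp Dm : Submodule ℝ H)
    (hDp : IsClosed (Dp : Set H)) (hDm : IsClosed (Dm : Set H))
    (horth : ∀ φ ∈ Dp, ∀ ψ ∈ Dm, (inner ℝ φ ψ : ℝ) = 0)
    (U UL : ℝ → H →L[ℝ] H)
    (hsgU : ∀ t ≥ (0:ℝ), ∀ s ≥ (0:ℝ), U (t + s) = (U t).comp (U s))
    (hsgUL : ∀ t ≥ (0:ℝ), ∀ s ≥ (0:ℝ), UL (t + s) = (UL t).comp (UL s))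
    (R : ℝ) (hR : 0 < R)
    (hUL : ∀ s ≥ 2 * R, ∀ φ ∈ Dmᗮ, UL s φ ∈ Dp)
    (hUm : ∀ t ≥ (0:ℝ), ∀ φ ∈ Dmᗮ, U t φ ∈ Dmᗮ)
    (hUp : ∀ t ≥ (0:ℝ), ∀ φ ∈ Dp, U t φ ∈ Dp)
    (hPkill : ∀ φ ∈ Dp, (Dpᗮ.subtypeL.comp (Dpᗮ.orthogonalProjection)) φ = 0)
    (M : H →L[ℝ] H) (hM : M = U (2 * R) - UL (2 * R)) :
    ∀ t ≥ 4 * R, ∀ φ : H,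
      (Dpᗮ.subtypeL.comp (Dpᗮ.orthogonalProjection))
          (U t ((Dmᗮ.subtypeL.comp (Dmᗮ.orthogonalProjection)) φ))
        = (Dpᗮ.subtypeL.comp (Dpᗮ.orthogonalProjection))
            (M (U (t - 4 * R) (M ((Dmᗮ.subtypeL.comp (Dmᗮ.orthogonalProjection)) φ)))) := by
  intro t ht φ
  set Q := Dpᗮ.subtypeL.comp (Dpᗮ.orthogonalProjection) with hQ
  set ψ : H := (Dmᗮ.subtypeL.comp (Dmᗮ.orthogonalProjection)) φ with hψ
  have hR2 : (0:ℝ) ≤ 2 * R := by linarith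
  have hR2' : 2 * R ≥ 2 * R := le_refl _
  have ht4 : (0:ℝ) ≤ t - 4 * R := by linarith
  have hψm : ψ ∈ Dmᗮ := (Dmᗮ.orthogonalProjection φ).2
  have hDpm : ∀ x ∈ Dp, x ∈ Dmᗮ := by
    intro x hx
    rw [Submodule.mem_orthogonal]
    intro y hy
    rw [real_inner_comm]
    exact horth x hx y hy
  -- semigroup identity
  have key : U t ψ = U (2*R) (U (t - 4*R) (U (2*R) ψ)) := by
    have h1 : U ((t - 4*R) + 2*R) = (U (t-4*R)).comp (U (2*R)) := hsgU _ ht4 _ hR2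
    have h2 : U (2*R + ((t-4*R) + 2*R)) = (U (2*R)).comp (U ((t-4*R)+2*R)) :=
      hsgU _ hR2 _ (by linarith)
    have key' : U t = (U (2*R)).comp ((U (t-4*R)).comp (U (2*R))) := by
      rw [← h1, ← h2]; congr 1; ring
    rw [key']; rfl
  -- membership facts
  have ha : UL (2*R) ψ ∈ Dp := hUL _ hR2' _ hψm
  have hb : U (t - 4*R) (UL (2*R) ψ) ∈ Dp := hUp _ ht4 _ ha
  have hterm2 : U (2*R) (U (t - 4*R) (UL (2*R) ψ)) ∈ Dp := hUp _ hR2 _ hb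
  have hterm4 : UL (2*R) (U (t - 4*R) (UL (2*R) ψ)) ∈ Dp :=
    hUL _ hR2' _ (hDpm _ hb)
  have hc : U (t - 4*R) (U (2*R) ψ) ∈ Dmᗮ :=
    hUm _ ht4 _ (hUm _ hR2 _ hψm)
  have hterm3 : UL (2*R) (U (t - 4*R) (U (2*R) ψ)) ∈ Dp := hUL _ hR2' _ hc
  -- expand
  have hexp : M (U (t - 4 * R) (M ψ))
      = U t ψ - UL (2*R) (U (t - 4*R) (U (2*R) ψ))
        - U (2*R) (U (t - 4*R) (UL (2*R) ψ))
        + UL (2*R) (U (t - 4*R) (UL (2*R) ψ)) := by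
    rw [hM]
    simp only [ContinuousLinearMap.sub_apply, map_sub, key]
    abel
  rw [hexp]
  simp only [map_add, map_sub, hPkill _ hterm2, hPkill _ hterm3, hPkill _ hterm4]
  abel
end

section
/- Let θ > 1, a, b > 0 with a < (1 - 1/θ)·(θb)^(-1/(θ-1)). Define g(x) = a + b·x^θ - x for x ≥ 0. Then g has exactly one root x₁ in the interval [0, (θb)^(-1/(θ-1))], g(x) > 0 on [0, x₁), and x₁ ≤ θa/(θ-1). -/
theorem stmt_15 (θ a b : ℝ) (hθ : 1 < θ) (ha : 0 < a) (hb : 0 < b)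
    (hcond : a < (1 - 1 / θ) * (θ * b) ^ (-(1 / (θ - 1)))) :
    ∃ x₁ : ℝ,
      (x₁ ∈ Set.Icc 0 ((θ * b) ^ (-(1 / (θ - 1)))) ∧ a + b * x₁ ^ θ - x₁ = 0) ∧
      (∀ x ∈ Set.Icc 0 ((θ * b) ^ (-(1 / (θ - 1)))), a + b * x ^ θ - x = 0 → x = x₁) ∧
      (∀ x ∈ Set.Ico 0 x₁, 0 < a + b * x ^ θ - x) ∧
      x₁ ≤ θ * a / (θ - 1) := by
  set M : ℝ := (θ * b) ^ (-(1 / (θ - 1))) with hM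
  have hθ0 : (0:ℝ) < θ := by linarith
  have hθ1 : (0:ℝ) < θ - 1 := by linarith
  have hθb : (0:ℝ) < θ * b := by positivity
  have hMpos : 0 < M := Real.rpow_pos_of_pos hθb _
  have hMpow : M ^ (θ - 1) = (θ * b)⁻¹ := by
    rw [hM, ← Real.rpow_mul hθb.le]
    have : -(1 / (θ - 1)) * (θ - 1) = -1 := by field_simp
    rw [this, Real.rpow_neg_one]
  have hMθ : b * M ^ θ = M / θ := by
    have : M ^ θ = M ^ (θ - 1) * M := by
      rw [← Real.rpow_add_one hMpos.ne' (θ - 1)]; ring_nf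
    rw [this, hMpow]; field_simp
  set f : ℝ → ℝ := fun x => a + b * x ^ θ - x with hf
  have hcont : ContinuousOn f (Set.Icc 0 M) := by
    apply ContinuousOn.sub
    · apply ContinuousOn.add continuousOn_const
      exact continuousOn_const.mul (continuousOn_id.rpow_const (fun x _ => Or.inr hθ0.le))
    · exact continuousOn_id
  have hanti : StrictAntiOn f (Set.Icc 0 M) := by
    apply strictAntiOn_of_deriv_neg (convex_Icc 0 M) hcont
    intro x hx
    rw [interior_Icc] at hx
    have hder : HasDerivAt f (b * (θ * x ^ (θ - 1)) - 1) x := by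
      have h1 : HasDerivAt (fun x : ℝ => x ^ θ) (θ * x ^ (θ - 1)) x :=
        Real.hasDerivAt_rpow_const (Or.inl hx.1.ne')
      have h2 := (h1.const_mul b).const_add a
      exact h2.sub (hasDerivAt_id x)
    rw [hder.deriv]
    have hxlt : x ^ (θ - 1) < M ^ (θ - 1) :=
      Real.rpow_lt_rpow hx.1.le hx.2 hθ1
    rw [hMpow] at hxlt
    have : b * (θ * x ^ (θ - 1)) < b * (θ * (θ * b)⁻¹) := by
      apply mul_lt_mul_of_pos_left _ hb
      exact mul_lt_mul_of_pos_left hxlt hθ0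
    have he : b * (θ * (θ * b)⁻¹) = 1 := by field_simp
    linarith [he ▸ this]
  have hg0 : f 0 = a := by
    simp [hf, Real.zero_rpow (by positivity : θ ≠ 0)]
  have hgM : f M < 0 := by
    have : f M = a + M / θ - M := by rw [hf]; simp only; rw [hMθ]
    rw [this]
    have he : (1 - 1 / θ) * M = M - M / θ := by field_simp
    linarith [he ▸ hcond]
  obtain ⟨x₁, hx₁mem, hx₁⟩ := intermediate_value_Icc' hMpos.le hcont
    (Set.mem_Icc.mpr ⟨hgM.le, (hg0 ▸ ha).le⟩)
  refine ⟨x₁, ⟨hx₁mem, hx₁⟩, ?_, ?_, ?_⟩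
  · intro x hxmem hx
    exact hanti.injOn hxmem hx₁mem (by rw [show a + b * x ^ θ - x = f x from rfl] at hx; rw [hx, hx₁])
  · intro x hx
    have hxmem : x ∈ Set.Icc 0 M := ⟨hx.1, le_trans hx.2.le hx₁mem.2⟩
    have := hanti hxmem hx₁mem hx.2
    rw [hx₁] at this
    exact this
  · set t : ℝ := θ * a / (θ - 1) with ht
    have htpos : 0 < t := by positivity
    by_cases hMt : M ≤ t
    · exact le_trans hx₁mem.2 hMt
    · push_neg at hMt
      have hft : f t < 0 := by
        have hxlt : t ^ (θ - 1) < M ^ (θ - 1) :=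
          Real.rpow_lt_rpow htpos.le hMt hθ1
        rw [hMpow] at hxlt
        have htθ : t ^ θ = t ^ (θ - 1) * t := by
          rw [← Real.rpow_add_one htpos.ne' (θ - 1)]; ring_nf
        have h1 : b * t ^ θ < t / θ := by
          rw [htθ]
          have : b * (t ^ (θ - 1) * t) < b * ((θ * b)⁻¹ * t) := by
            apply mul_lt_mul_of_pos_left _ hb
            exact mul_lt_mul_of_pos_right hxlt htpos
          have he : b * ((θ * b)⁻¹ * t) = t / θ := by field_simp
          linarith [he ▸ this]
        have h2 : a + t / θ - t = 0 := by
          rw [ht]; field_simp; ring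
        have : f t = a + b * t ^ θ - t := rfl
        linarith
      by_contra hcon
      push_neg at hcon
      have htmem : t ∈ Set.Icc 0 M := ⟨htpos.le, hMt.le⟩
      have := hanti htmem hx₁mem hcon
      rw [hx₁] at this
      linarith
end
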